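/- Let ξ_1,…,ξ_n be i.i.d. Bernoulli(p) random variables with 0 < p < 1, q = 1−p, and fix 2 ≤ r ≤ n. For (a,s) with 1 ≤ a,s ≤ n and a+(r−1)s ≤ n, let A_{a,s} be the event {ξ_a = ξ_{a+s} = ⋯ = ξ_{a+(r−1)s} = 1} ∩ ({a ≤ s} ∪ {ξ_{a−s} = 0}), and let I = ∑_{(a,s)} P(A_{a,s}). Then p^r·(n−r)²/(2(r−1)) − p^{r+1}·n²/(2r) ≤ I ≤ p^r·n²/(2(r−1)) − p^{r+1}·(n−r)²/(2r). -/

import Mathlib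

open MeasureTheory ProbabilityTheory Finset


private lemma gauss_real (m : ℕ) : ∑ s ∈ Icc 1 m, (s : ℝ) = m * (m + 1) / 2 := by
  induction m with
  | zero => simp
  | succ m ih =>
    rw [Finset.sum_Icc_succ_top (by omega)]
    push_cast
    rw [ih]; ring

private lemma sum_trunc_eq (n k : ℕ) (hk : 1 ≤ k) (hkn : k ≤ n) :
    ∑ s ∈ Icc 1 n, ((n - k * s : ℕ) : ℝ)
      = (n / k : ℕ) * n - k * ((n / k : ℕ) * ((n / k : ℕ) + 1) / 2) := by
  set m := n / k with hm
  have hmn : m ≤ n := Nat.div_le_self n k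
  have hkm : k * m ≤ n := Nat.mul_div_le n k
  have hlt : n < k * (m + 1) := by
    have h1 : k * m + n % k = n := by rw [hm]; exact Nat.div_add_mod n k
    have h2 : n % k < k := Nat.mod_lt n (by omega)
    have h3 : k * (m + 1) = k * m + k := by ring
    omega
  rw [← Finset.sum_subset (Finset.Icc_subset_Icc_right hmn)]
  · have : ∀ s ∈ Icc 1 m, ((n - k * s : ℕ) : ℝ) = (n : ℝ) - k * s := by
      intro s hs
      simp only [mem_Icc] at hs
      have : k * s ≤ n := le_trans (Nat.mul_le_mul_left k hs.2) hkm
      push_cast [Nat.cast_sub this]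
      ring
    rw [Finset.sum_congr rfl this, Finset.sum_sub_distrib, Finset.sum_const, ← Finset.mul_sum,
      gauss_real]
    simp only [Nat.card_Icc, Nat.add_sub_cancel, nsmul_eq_mul]
    try ring
  · intro s hs hns
    simp only [mem_Icc] at hs hns
    have h1 : m + 1 ≤ s := by omega
    have : k * (m + 1) ≤ k * s := Nat.mul_le_mul_left k h1
    have : n - k * s = 0 := by omega
    simp [this]

private lemma sum_trunc_ub (n k : ℕ) (hk : 1 ≤ k) (hkn : k ≤ n) :
    ∑ s ∈ Icc 1 n, ((n - k * s : ℕ) : ℝ) ≤ (n : ℝ) ^ 2 / (2 * k) := by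
  rw [sum_trunc_eq n k hk hkn]
  set m := n / k with hm
  have hkm : (k : ℝ) * m ≤ n := by exact_mod_cast Nat.mul_div_le n k
  have hK : (1 : ℝ) ≤ k := by exact_mod_cast hk
  have hM : (0 : ℝ) ≤ m := by positivity
  rw [le_div_iff₀ (by positivity), ← sub_nonneg]
  nlinarith [sq_nonneg ((n : ℝ) - k * m), mul_nonneg (mul_nonneg (by linarith : (0:ℝ) ≤ (k:ℝ)) (by linarith : (0:ℝ) ≤ (k:ℝ))) hM, sq_nonneg ((k:ℝ) * m)]

private lemma sum_trunc_lb (n k : ℕ) (hk : 1 ≤ k) (hkn : k ≤ n) :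
    ((n : ℝ) - k) ^ 2 / (2 * k) ≤ ∑ s ∈ Icc 1 n, ((n - k * s : ℕ) : ℝ) := by
  rw [sum_trunc_eq n k hk hkn]
  set m := n / k with hm
  have hkm : (k : ℝ) * m ≤ n := by exact_mod_cast Nat.mul_div_le n k
  have hlt : (n : ℝ) + 1 ≤ k * (m + 1) := by
    have h1 : k * m + n % k = n := by rw [hm]; exact Nat.div_add_mod n k
    have h2 : n % k < k := Nat.mod_lt n (by omega)
    have : n + 1 ≤ k * (m + 1) := by
      have h3 : k * (m + 1) = k * m + k := by ring
      omega
    exact_mod_cast this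
  have hK : (1 : ℝ) ≤ k := by exact_mod_cast hk
  have hN : (k : ℝ) ≤ n := by exact_mod_cast hkn
  have hM : (0 : ℝ) ≤ m := by positivity
  rw [div_le_iff₀ (by positivity), ← sub_nonneg]
  nlinarith [mul_nonneg (by linarith : (0:ℝ) ≤ (k:ℝ)*m - ((n:ℝ) - k + 1))
      (by linarith : (0:ℝ) ≤ (n:ℝ) - (k:ℝ)*m),
    mul_nonneg (by linarith : (0:ℝ) ≤ (k:ℝ) - 1) (by linarith : (0:ℝ) ≤ (n:ℝ) - k),
    mul_nonneg (sub_nonneg.2 hN) (sub_nonneg.2 hK)]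

private lemma meas_bool_prod {Ω : Type*} [MeasurableSpace Ω] (μ : Measure Ω)
    (ξ : ℕ → Ω → Bool) (hindep : iIndepFun ξ μ)
    (T : Finset ℕ) (v : ℕ → Bool) :
    μ (⋂ i ∈ T, {ω | ξ i ω = v i}) = ∏ i ∈ T, μ {ω | ξ i ω = v i} :=
  hindep.meas_biInter (fun i _ => ⟨{v i}, measurableSet_singleton _, rfl⟩)

private lemma prob_event {Ω : Type*} [MeasurableSpace Ω] (μ : Measure Ω) [IsProbabilityMeasure μ]
    (p : ℝ) (hp0 : 0 < p) (hp1 : p < 1) (r : ℕ)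
    (ξ : ℕ → Ω → Bool) (hmeas : ∀ i, Measurable (ξ i))
    (hindep : iIndepFun ξ μ)
    (hbern : ∀ i, μ {ω | ξ i ω = true} = ENNReal.ofReal p)
    (a s : ℕ) (ha : 1 ≤ a) (hs : 1 ≤ s) :
    (μ {ω | (∀ j < r, ξ (a + j * s) ω = true) ∧ (a ≤ s ∨ ξ (a - s) ω = false)}).toReal
      = if a ≤ s then p ^ r else p ^ r * (1 - p) := by
  have hfalse : ∀ i, μ {ω | ξ i ω = false} = ENNReal.ofReal (1 - p) := by
    intro i
    have hc : {ω | ξ i ω = false} = {ω | ξ i ω = true}ᶜ := by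
      ext ω; simp
    have hms : MeasurableSet {ω | ξ i ω = true} :=
      (hmeas i) (measurableSet_singleton true)
    rw [hc, measure_compl hms (measure_ne_top μ _), hbern, measure_univ,
      ← ENNReal.ofReal_one, ← ENNReal.ofReal_sub _ hp0.le]
  set T : Finset ℕ := (range r).image (fun j => a + j * s) with hT
  have hinj : Function.Injective (fun j => a + j * s) := by
    intro x y hxy
    simp only at hxy
    have hx : x * s = y * s := by omega
    exact Nat.eq_of_mul_eq_mul_right hs hx
  have hTcard : T.card = r := by
    rw [hT, Finset.card_image_of_injective _ hinj, card_range]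
  have hprodT : ∏ i ∈ T, μ {ω | ξ i ω = true} = ENNReal.ofReal p ^ r := by
    rw [Finset.prod_congr rfl (fun i _ => hbern i), Finset.prod_const, hTcard]
  by_cases h : a ≤ s
  · have hset : {ω | (∀ j < r, ξ (a + j * s) ω = true) ∧ (a ≤ s ∨ ξ (a - s) ω = false)}
        = ⋂ i ∈ T, {ω | ξ i ω = true} := by
      ext ω
      simp only [Set.mem_setOf_eq, Set.mem_iInter, hT, mem_image, mem_range]
      constructor
      · rintro ⟨h1, -⟩ i ⟨j, hj, rfl⟩; exact h1 j hj
      · intro h1; exact ⟨fun j hj => h1 _ ⟨j, hj, rfl⟩, Or.inl h⟩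
    rw [hset, meas_bool_prod μ ξ hindep T (fun _ => true), hprodT, if_pos h]
    rw [← ENNReal.ofReal_pow hp0.le, ENNReal.toReal_ofReal (by positivity)]
  · have hne : ∀ j, a + j * s ≠ a - s := by
      intro j he
      have := Nat.le_add_right a (j * s)
      omega
    have hnot : a - s ∉ T := by
      rw [hT]
      simp only [mem_image, mem_range, not_exists]
      rintro j ⟨hj, hje⟩
      exact hne j hje
    set v : ℕ → Bool := fun i => if i = a - s then false else true with hv
    have hset : {ω | (∀ j < r, ξ (a + j * s) ω = true) ∧ (a ≤ s ∨ ξ (a - s) ω = false)}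
        = ⋂ i ∈ insert (a - s) T, {ω | ξ i ω = v i} := by
      ext ω
      simp only [Set.mem_setOf_eq, Set.mem_iInter, mem_insert, hT, mem_image, mem_range]
      constructor
      · rintro ⟨h1, h2⟩ i hi
        rcases hi with rfl | ⟨j, hj, rfl⟩
        · rw [hv]; simp only [if_pos rfl]; tauto
        · rw [hv]; simp only [if_neg (hne j)]; exact h1 j hj
      · intro h1
        refine ⟨fun j hj => ?_, Or.inr ?_⟩
        · have := h1 _ (Or.inr ⟨j, hj, rfl⟩)
          rw [hv] at this; simpa [if_neg (hne j)] using this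
        · have := h1 _ (Or.inl rfl)
          rw [hv] at this; simpa using this
    rw [hset, meas_bool_prod μ ξ hindep _ v, Finset.prod_insert hnot]
    have h1 : μ {ω | ξ (a - s) ω = v (a - s)} = ENNReal.ofReal (1 - p) := by
      rw [hv]; simp only [if_pos rfl]; exact hfalse _
    have h2 : ∏ i ∈ T, μ {ω | ξ i ω = v i} = ENNReal.ofReal p ^ r := by
      rw [← hprodT]
      refine Finset.prod_congr rfl (fun i hi => ?_)
      have : i ≠ a - s := by
        rw [hT] at hi
        simp only [mem_image, mem_range] at hi
        obtain ⟨j, hj, rfl⟩ := hi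
        exact hne j
      rw [hv]; simp [if_neg this]
    rw [h1, h2, if_neg h, ← ENNReal.ofReal_pow hp0.le, ← ENNReal.ofReal_mul (by linarith),
      ENNReal.toReal_ofReal (by nlinarith [pow_pos hp0 r])]
    ring


theorem stmt5 {Ω : Type*} [MeasurableSpace Ω] (μ : Measure Ω) [IsProbabilityMeasure μ]
    (p : ℝ) (hp0 : 0 < p) (hp1 : p < 1) (n r : ℕ) (hr : 2 ≤ r) (hrn : r ≤ n)
    (ξ : ℕ → Ω → Bool) (hmeas : ∀ i, Measurable (ξ i))
    (hindep : iIndepFun ξ μ)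
    (hbern : ∀ i, μ {ω | ξ i ω = true} = ENNReal.ofReal p) :
    p ^ r * ((n : ℝ) - r) ^ 2 / (2 * ((r : ℝ) - 1)) - p ^ (r + 1) * (n : ℝ) ^ 2 / (2 * r) ≤
      (∑ q ∈ (Finset.Icc 1 n ×ˢ Finset.Icc 1 n).filter
          (fun q : ℕ × ℕ => q.1 + (r - 1) * q.2 ≤ n),
        (μ {ω | (∀ j < r, ξ (q.1 + j * q.2) ω = true) ∧
            (q.1 ≤ q.2 ∨ ξ (q.1 - q.2) ω = false)}).toReal) ∧
    (∑ q ∈ (Finset.Icc 1 n ×ˢ Finset.Icc 1 n).filter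
          (fun q : ℕ × ℕ => q.1 + (r - 1) * q.2 ≤ n),
        (μ {ω | (∀ j < r, ξ (q.1 + j * q.2) ω = true) ∧
            (q.1 ≤ q.2 ∨ ξ (q.1 - q.2) ω = false)}).toReal) ≤
      p ^ r * (n : ℝ) ^ 2 / (2 * ((r : ℝ) - 1)) - p ^ (r + 1) * ((n : ℝ) - r) ^ 2 / (2 * r) := by
  set k := r - 1 with hkdef
  have hkr : k + 1 = r := by omega
  have hk1 : 1 ≤ k := by omega
  have hkn : k ≤ n := by omega
  -- Step 1: evaluate the sum exactly
  have hstep1 : (∑ q ∈ (Finset.Icc 1 n ×ˢ Finset.Icc 1 n).filter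
          (fun q : ℕ × ℕ => q.1 + k * q.2 ≤ n),
        (μ {ω | (∀ j < r, ξ (q.1 + j * q.2) ω = true) ∧
            (q.1 ≤ q.2 ∨ ξ (q.1 - q.2) ω = false)}).toReal)
      = p ^ r * (∑ s ∈ Icc 1 n, ((n - k * s : ℕ) : ℝ))
        - p ^ (r + 1) * (∑ s ∈ Icc 1 n, ((n - r * s : ℕ) : ℝ)) := by
    have hval : ∀ q ∈ (Finset.Icc 1 n ×ˢ Finset.Icc 1 n).filter
          (fun q : ℕ × ℕ => q.1 + k * q.2 ≤ n),
        (μ {ω | (∀ j < r, ξ (q.1 + j * q.2) ω = true) ∧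
            (q.1 ≤ q.2 ∨ ξ (q.1 - q.2) ω = false)}).toReal
          = (fun q : ℕ × ℕ => if q.1 ≤ q.2 then p ^ r else p ^ r * (1 - p)) q := by
      rintro ⟨a, s⟩ hq
      simp only [Finset.mem_filter, Finset.mem_product, Finset.mem_Icc] at hq
      exact prob_event μ p hp0 hp1 r ξ hmeas hindep hbern a s hq.1.1.1 hq.1.2.1
    rw [Finset.sum_congr rfl hval, Finset.sum_filter, Finset.sum_product_right]
    have hinner : ∀ s ∈ Icc 1 n,
        (∑ a ∈ Icc 1 n, if a + k * s ≤ n then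
            (if a ≤ s then p ^ r else p ^ r * (1 - p)) else 0)
          = p ^ r * ((n - k * s : ℕ) : ℝ) - p ^ (r + 1) * ((n - r * s : ℕ) : ℝ) := by
      intro s hs
      have hrs : r * s = k * s + s := by rw [← hkr]; ring
      have hpt : ∀ a, (if a + k * s ≤ n then
            (if a ≤ s then p ^ r else p ^ r * (1 - p)) else 0)
          = (if a + k * s ≤ n then p ^ r else 0)
            - (if a + k * s ≤ n ∧ s < a then p ^ (r + 1) else 0) := by
        intro a
        by_cases h1 : a + k * s ≤ n
        · by_cases h2 : a ≤ s
          · rw [if_pos h1, if_pos h2, if_pos h1, if_neg (by omega)]; ring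
          · rw [if_pos h1, if_neg h2, if_pos h1, if_pos ⟨h1, by omega⟩, pow_succ]; ring
        · rw [if_neg h1, if_neg h1, if_neg (by tauto)]; ring
      rw [Finset.sum_congr rfl (fun a _ => hpt a), Finset.sum_sub_distrib]
      congr 1
      · rw [← Finset.sum_filter]
        have hfe : (Icc 1 n).filter (fun a => a + k * s ≤ n) = Icc 1 (n - k * s) := by
          ext a
          simp only [mem_filter, mem_Icc]
          have h0 : 0 ≤ k * s := Nat.zero_le _
          omega
        rw [hfe, Finset.sum_const, Nat.card_Icc, nsmul_eq_mul]
        push_cast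
        ring
      · rw [← Finset.sum_filter]
        have hfe : (Icc 1 n).filter (fun a => a + k * s ≤ n ∧ s < a)
            = Icc (s + 1) (n - k * s) := by
          ext a
          simp only [mem_filter, mem_Icc]
          have h0 : 0 ≤ k * s := Nat.zero_le _
          omega
        have hcard : (n - r * s) = (n - k * s) + 1 - (s + 1) := by
          rw [hrs]; omega
        rw [hfe, Finset.sum_const, Nat.card_Icc, nsmul_eq_mul, ← hcard]
        ring
    rw [Finset.sum_congr rfl hinner, Finset.sum_sub_distrib, ← Finset.mul_sum, ← Finset.mul_sum]
  rw [hstep1]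
  -- Step 2: the bounds
  have hcast : (r : ℝ) - 1 = (k : ℝ) := by
    rw [hkdef]
    push_cast [Nat.cast_sub (by omega : 1 ≤ r)]
    ring
  have hnr : (0 : ℝ) ≤ (n : ℝ) - r := by
    have : (r : ℝ) ≤ n := by exact_mod_cast hrn
    linarith
  have hsq : ((n : ℝ) - r) ^ 2 ≤ ((n : ℝ) - k) ^ 2 := by
    have hkrR : (k : ℝ) ≤ r := by exact_mod_cast (by omega : k ≤ r)
    nlinarith
  have hpr : (0 : ℝ) < p ^ r := pow_pos hp0 r
  have hpr1 : (0 : ℝ) < p ^ (r + 1) := pow_pos hp0 (r + 1)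
  have hkR : (0 : ℝ) < (k : ℝ) := by exact_mod_cast hk1
  have hrR : (0 : ℝ) < (r : ℝ) := by exact_mod_cast (by omega : 0 < r)
  have hA : ((n : ℝ) - r) ^ 2 / (2 * k) ≤ ∑ s ∈ Icc 1 n, ((n - k * s : ℕ) : ℝ) :=
    le_trans (by gcongr) (sum_trunc_lb n k hk1 hkn)
  have hA' : ∑ s ∈ Icc 1 n, ((n - k * s : ℕ) : ℝ) ≤ (n : ℝ) ^ 2 / (2 * k) :=
    sum_trunc_ub n k hk1 hkn
  have hB : ((n : ℝ) - r) ^ 2 / (2 * r) ≤ ∑ s ∈ Icc 1 n, ((n - r * s : ℕ) : ℝ) :=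
    sum_trunc_lb n r (by omega) hrn
  have hB' : ∑ s ∈ Icc 1 n, ((n - r * s : ℕ) : ℝ) ≤ (n : ℝ) ^ 2 / (2 * r) :=
    sum_trunc_ub n r (by omega) hrn
  have e1 := mul_le_mul_of_nonneg_left hA hpr.le
  have e2 := mul_le_mul_of_nonneg_left hA' hpr.le
  have e3 := mul_le_mul_of_nonneg_left hB hpr1.le
  have e4 := mul_le_mul_of_nonneg_left hB' hpr1.le
  rw [hcast]
  constructor
  · rw [mul_div_assoc, mul_div_assoc]
    linarith
  · rw [mul_div_assoc, mul_div_assoc]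
    linarith
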